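/- A permutation π ∈ S_n is 132-pattern avoiding (there is no triple a < b < c with π(a) < π(c) < π(b)) if and only if its Rothe diagram D(π) = {(i,j) : i < π⁻¹(j) and j < π(i)} equals the Young diagram of a partition, i.e., D(π) = {(i,j) : j ≤ λ_i} for some weakly decreasing sequence λ. -/

import Mathlib

open Equiv MvPolynomial

/-- A permutation of ℕ has finite support. -/
def FinSupp (w : Equiv.Perm ℕ) : Prop := {i | w i ≠ i}.Finite

/-- Inversion set Inv(w) = {(i,j) : i < j, w i > w j}. -/
def invSet (w : Equiv.Perm ℕ) : Set (ℕ × ℕ) := {p | p.1 < p.2 ∧ w p.2 < w p.1}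

/-- Co-inversion set coInv(w) = {(i,j) : i < j, w i < w j}. -/
def coinvSet (w : Equiv.Perm ℕ) : Set (ℕ × ℕ) := {p | p.1 < p.2 ∧ w p.1 < w p.2}

/-- Coxeter length ℓ(w) = |Inv(w)|. -/
noncomputable def len (w : Equiv.Perm ℕ) : ℕ := (invSet w).ncard

/-- Cover relation of left weak order: u = s_k * w with ℓ(u) = ℓ(w) + 1. -/
def WeakCover (w u : Equiv.Perm ℕ) : Prop :=
  ∃ k, u = Equiv.swap k (k + 1) * w ∧ len u = len w + 1

/-- Left weak order: reflexive-transitive closure of weak covers. -/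
def leL (w u : Equiv.Perm ℕ) : Prop := Relation.ReflTransGen WeakCover w u

/-- π avoids the pattern 132 (π is dominant). -/
def Avoids132 (π : Equiv.Perm ℕ) : Prop :=
  ¬ ∃ a b c : ℕ, a < b ∧ b < c ∧ π a < π c ∧ π c < π b

/-- Rothe diagram D(π) (0-indexed conventions). -/
def Rothe (π : Equiv.Perm ℕ) : Set (ℕ × ℕ) := {p | p.1 < π⁻¹ p.2 ∧ p.2 < π p.1}

/-- Young diagram of a partition (0-indexed): row i has l i cells. -/
def yd (l : ℕ → ℕ) : Set (ℕ × ℕ) := {p | p.2 < l p.1}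

/-- Conjugate partition (0-indexed): column j has |{i : l i > j}| cells. -/
noncomputable def conjPart (l : ℕ → ℕ) (j : ℕ) : ℕ := {i | j < l i}.ncard

/-- A pipe dream: a finite set of crossing tiles together with the (uniquely
determined) labels of the pipes on the four edges of each tile.  At a cross
tile the pipes pass straight through; at a bump tile the pipe from the north
exits west and the pipe from the east exits south.  Pipe j enters the quadrant
at the north edge of column j. -/
structure PipeDream where
  cross : Finset (ℕ × ℕ)
  north : ℕ × ℕ → ℕ
  east : ℕ × ℕ → ℕ
  south : ℕ × ℕ → ℕ
  west : ℕ × ℕ → ℕ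
  north_top : ∀ j, north (0, j) = j
  north_succ : ∀ i j, north (i + 1, j) = south (i, j)
  east_eq : ∀ i j, east (i, j) = west (i, j + 1)
  south_cross : ∀ p ∈ cross, south p = north p
  west_cross : ∀ p ∈ cross, west p = east p
  south_bump : ∀ p, p ∉ cross → south p = east p
  west_bump : ∀ p, p ∉ cross → west p = north p

namespace PipeDream

/-- Pipes a and b cross at position p. -/
def CrossAt (P : PipeDream) (a b : ℕ) (p : ℕ × ℕ) : Prop :=
  p ∈ P.cross ∧ ({P.north p, P.east p} : Set ℕ) = {a, b}

/-- A pipe dream is reduced if no two pipes cross more than once. -/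
def Reduced (P : PipeDream) : Prop :=
  ∀ a b p q, P.CrossAt a b p → P.CrossAt a b q → p = q

/-- P is a pipe dream for the permutation w: pipe a exits on the west edge at
row w⁻¹(a), i.e. the one-line notation read along the west edge is w. -/
def IsFor (P : PipeDream) (w : Equiv.Perm ℕ) : Prop := ∀ i, P.west (i, 0) = w i

/-- Pipe k passes through the tile p. -/
def OnPipe (P : PipeDream) (k : ℕ) (p : ℕ × ℕ) : Prop := P.north p = k ∨ P.east p = k

/-- p lies weakly northwest of pipe k. -/
def NWOfPipe (P : PipeDream) (k : ℕ) (p : ℕ × ℕ) : Prop :=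
  ∃ q, P.OnPipe k q ∧ p.1 ≤ q.1 ∧ p.2 ≤ q.2

end PipeDream

/-- The set of reduced pipe dreams for w. -/
def PD (w : Equiv.Perm ℕ) : Set PipeDream := {P | P.Reduced ∧ P.IsFor w}

/-- The set of π-dominated positions of a pipe dream P ∈ PD(w), where π is the
dominant permutation with Rothe diagram the Young diagram of l:
row(p) < λ'(π(w⁻¹(s_p))) (0-indexed), s_p being the pipe exiting p south. -/
noncomputable def dominated (π : Equiv.Perm ℕ) (l : ℕ → ℕ) (w : Equiv.Perm ℕ)
    (P : PipeDream) : Set (ℕ × ℕ) :=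
  {p | p.1 < conjPart l (π (w⁻¹ (P.south p)))}

/-- The Schubert polynomial as the pipe dream generating function. -/
noncomputable def Schub (w : Equiv.Perm ℕ) : MvPolynomial ℕ ℤ :=
  ∑ᶠ P ∈ PD w, ∏ p ∈ P.cross, X p.1

/-- The polynomial ring ℤ[x;y]: x-variables are `Sum.inl i`, y-variables `Sum.inr i`. -/
abbrev PolyXY := MvPolynomial (ℕ ⊕ ℕ) ℤ

/-- The field of rational functions in the x- and y-variables. -/
noncomputable abbrev RatXY := FractionRing PolyXY

noncomputable def Xv (i : ℕ) : RatXY := algebraMap PolyXY RatXY (X (Sum.inl i))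
noncomputable def Yv (i : ℕ) : RatXY := algebraMap PolyXY RatXY (X (Sum.inr i))

/-- The π-padded Schubert polynomial 𝔖_w^π(x;y) = y^λ · 𝔖_w(x₁/y₁, x₂/y₂, …),
viewed in the field of rational functions. -/
noncomputable def padded (l : ℕ → ℕ) (w : Equiv.Perm ℕ) : RatXY :=
  (∏ᶠ i, Yv i ^ l i) * (aeval (fun i => Xv i / Yv i) (Schub w))

/-- Δ = Σ_i x_i ∂/∂y_i. -/
noncomputable def deltaOp (f : PolyXY) : PolyXY :=
  ∑ᶠ i : ℕ, X (Sum.inl i) * pderiv (Sum.inr i) f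

/-- ∇ = Σ_i y_i ∂/∂x_i. -/
noncomputable def nablaOp (f : PolyXY) : PolyXY :=
  ∑ᶠ i : ℕ, X (Sum.inr i) * pderiv (Sum.inl i) f

/-- π is 132-avoiding iff its Rothe diagram is the Young diagram
of a partition. -/
theorem stmt2 (π : Equiv.Perm ℕ) (hπ : FinSupp π) :
    Avoids132 π ↔ ∃ l : ℕ → ℕ, Antitone l ∧ (Function.support l).Finite ∧
      Rothe π = yd l := by
  constructor
  · intro hav
    set l : ℕ → ℕ := fun i => sInf {j | (i, j) ∉ Rothe π} with hl
    -- rows are downward closed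
    have hdc : ∀ i j j', (i, j) ∈ Rothe π → j' < j → (i, j') ∈ Rothe π := by
      intro i j j' hj hj'
      simp only [Rothe, Set.mem_setOf_eq] at hj ⊢
      obtain ⟨h1, h2⟩ := hj
      refine ⟨?_, lt_trans hj' h2⟩
      by_contra hle
      push_neg at hle
      have hne' : π⁻¹ j' ≠ i := by
        intro he
        have : π i = j' := by rw [← he, Equiv.Perm.coe_inv, Equiv.apply_symm_apply]
        omega
      have ha : π⁻¹ j' < i := lt_of_le_of_ne hle hne'
      exact hav ⟨π⁻¹ j', i, π⁻¹ j, ha, h1, by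
        simp only [Equiv.Perm.coe_inv, Equiv.apply_symm_apply]; omega⟩
    have hrow : ∀ i j, (i, j) ∈ Rothe π ↔ j < l i := by
      intro i j
      have hne : (i, π i) ∉ Rothe π := fun h => lt_irrefl _ h.2
      have hmem : l i ∈ {j | (i, j) ∉ Rothe π} := Nat.sInf_mem ⟨π i, hne⟩
      constructor
      · intro hj
        by_contra hge
        push_neg at hge
        rcases lt_or_eq_of_le hge with h | h
        · exact hmem (hdc i j (l i) hj h)
        · exact hmem (h ▸ hj)
      · intro hj
        have := Nat.notMem_of_lt_sInf (s := {j | (i, j) ∉ Rothe π}) hj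
        simpa using this
    -- rows are nested
    have hstep : ∀ i j, (i + 1, j) ∈ Rothe π → (i, j) ∈ Rothe π := by
      intro i j hj
      simp only [Rothe, Set.mem_setOf_eq] at hj ⊢
      obtain ⟨h1, h2⟩ := hj
      refine ⟨lt_trans (Nat.lt_succ_self i) h1, ?_⟩
      by_contra hle
      push_neg at hle
      have hne' : π i ≠ j := by
        intro he
        have : π⁻¹ j = i := by rw [← he, Equiv.Perm.coe_inv, Equiv.symm_apply_apply]
        omega
      have hlt : π i < j := lt_of_le_of_ne hle hne'
      exact hav ⟨i, i + 1, π⁻¹ j, Nat.lt_succ_self i, h1, by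
        simp only [Equiv.Perm.coe_inv, Equiv.apply_symm_apply]; omega⟩
    refine ⟨l, ?_, ?_, ?_⟩
    · refine antitone_nat_of_succ_le fun n => ?_
      by_contra hlt
      push_neg at hlt
      have h1 : (n + 1, l n) ∈ Rothe π := (hrow (n + 1) (l n)).2 hlt
      have h2 : (n, l n) ∈ Rothe π := hstep n (l n) h1
      exact lt_irrefl _ ((hrow n (l n)).1 h2)
    · refine Set.Finite.subset (Set.finite_Iio (π⁻¹ 0)) ?_
      intro i hi
      have h0 : 0 < l i := Nat.pos_of_ne_zero hi
      exact ((hrow i 0).2 h0).1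
    · ext ⟨i, j⟩
      exact hrow i j
  · rintro ⟨l, hanti, _, heq⟩ ⟨a, b, c, hab, hbc, h1, h2⟩
    have hb : (b, π c) ∈ Rothe π := ⟨by simp [hbc], h2⟩
    have ha : (a, π c) ∉ Rothe π := fun h => absurd h.2 (not_lt.2 h1.le)
    rw [heq] at hb ha
    have : π c < l b := hb
    have : ¬ π c < l a := ha
    have := hanti hab.le
    omega
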